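/- arXiv:2409.16014 — 5 statements merged into one kernel-verified Lean document; each statement's English description precedes it below -/
import Mathlib

section
/- Let $\Bbbk$ be an algebraically closed field of characteristic zero, let $0 \le p' \le p$ be integers, let $b_1, \ldots, b_{p'} \in \Bbbk$ be fixed, and let $a^{(1)}, \ldots, a^{(p-p')} \in \Bbbk$ be given. Then there exist $b_{p'+1}, \ldots, b_p \in \Bbbk$ such that $e_r(b_1, \ldots, b_p) = a^{(r)}$ for all $1 \le r \le p - p'$. -/
open Finset

/-- The `r`-th elementary symmetric polynomial of `p` values. -/
noncomputable def esym {k : Type*} [CommRing k] (p r : ℕ) (b : Fin p → k) : k :=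
  ∑ s ∈ Finset.powersetCard r (Finset.univ : Finset (Fin p)), ∏ i ∈ s, b i

open Polynomial in
/-- Key induction: given a monic polynomial `P₀`, we can find a monic polynomial `P` of
degree `m` such that the top `m` coefficients (below the leading one) of `P₀ * P` take
any prescribed values. -/
lemma key_coeff_lemma {k : Type*} [Field k] (P₀ : k[X]) (hP₀ : P₀.Monic) (m : ℕ) (f : ℕ → k) :
    ∃ P : k[X], P.Monic ∧ P.natDegree = m ∧
      ∀ r, 1 ≤ r → r ≤ m → (P₀ * P).coeff (P₀.natDegree + m - r) = f r := by
  induction m with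
  | zero => exact ⟨1, monic_one, natDegree_one, fun r h1 h2 => absurd (h1.trans h2) (by omega)⟩
  | succ m IH =>
    obtain ⟨P₁, hm, hd, hc⟩ := IH
    set c : k := f (m + 1) - (P₀ * (P₁ * X)).coeff P₀.natDegree with hc_def
    refine ⟨P₁ * X + C c, ?_, ?_, ?_⟩
    · apply (hm.mul monic_X).add_of_left
      rw [degree_eq_natDegree (hm.mul monic_X).ne_zero, natDegree_mul_X hm.ne_zero, hd]
      exact lt_of_le_of_lt degree_C_le
        (by exact_mod_cast Nat.cast_lt.mpr (Nat.succ_pos m) : (0:WithBot ℕ) < (m+1 : ℕ))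
    · rw [natDegree_add_C, natDegree_mul_X hm.ne_zero, hd]
    · intro r h1 h2
      rw [mul_add, coeff_add, mul_comm P₀ (C c), C_mul', coeff_smul]
      rcases eq_or_lt_of_le h2 with rfl | hlt
      · have : P₀.natDegree + (m + 1) - (m + 1) = P₀.natDegree := by omega
        rw [this, hP₀.coeff_natDegree, smul_eq_mul, mul_one, ← mul_assoc, hc_def]
        ring
      · have hr : r ≤ m := by omega
        have e1 : P₀.natDegree + (m + 1) - r = (P₀.natDegree + m - r) + 1 := by omega
        rw [e1, ← mul_assoc, coeff_mul_X, hc r h1 hr]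
        have : P₀.coeff (P₀.natDegree + m - r + 1) = 0 :=
          coeff_eq_zero_of_natDegree_lt (by omega)
        rw [this, smul_eq_mul, mul_zero, add_zero]

lemma ofFn_cast {α : Type*} {n n' : ℕ} (h : n = n') (f : Fin n' → α) :
    List.ofFn (fun i => f (Fin.cast h i)) = List.ofFn f := by subst h; rfl

lemma univ_val_map_eq_ofFn {k : Type*} {n : ℕ} (f : Fin n → k) :
    (Finset.univ.val.map f : Multiset k) = ↑(List.ofFn f) := by
  simp [List.ofFn_eq_map, Fin.univ_def, Finset.univ, Fintype.elems]

open Polynomial in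
/-- Induction step of Lemma 4.1: over an algebraically closed field of characteristic
zero, a partial list `b₀ : Fin p' → k` can be extended to `b : Fin p → k` so that
`e_r(b_1, …, b_p) = a r` for all `1 ≤ r ≤ p - p'`. -/
theorem stmt1 {k : Type*} [Field k] [IsAlgClosed k] [CharZero k]
    (p' p : ℕ) (h : p' ≤ p) (b₀ : Fin p' → k) (a : ℕ → k) :
    ∃ b : Fin p → k, (∀ j : Fin p', b (Fin.castLE h j) = b₀ j) ∧
      ∀ r : ℕ, 1 ≤ r → r ≤ p - p' → esym p r b = a r := by
  classical
  set m := p - p' with hm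
  have hpe : p = p' + m := by omega
  -- the multiset of the fixed values
  set M₀ : Multiset k := Multiset.map b₀ Finset.univ.val with hM₀
  have hM₀card : Multiset.card M₀ = p' := by simp [hM₀]
  set P₀ : k[X] := (M₀.map fun x => X - C x).prod with hP₀def
  have hP₀monic : P₀.Monic :=
    monic_multiset_prod_of_monic _ _ (fun x _ => monic_X_sub_C x)
  have hP₀deg : P₀.natDegree = p' := by
    have hmon : ∀ q ∈ M₀.map (fun x => X - C x), q.Monic := by
      intro q hq
      obtain ⟨x, -, rfl⟩ := Multiset.mem_map.mp hq
      exact monic_X_sub_C x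
    rw [hP₀def, natDegree_multiset_prod_of_monic _ hmon]
    simp [Multiset.map_map, Function.comp, hM₀card]
  obtain ⟨P, hPmonic, hPdeg, hPcoeff⟩ := key_coeff_lemma P₀ hP₀monic m (fun r => (-1) ^ r * a r)
  -- roots of P
  have hsplit : Multiset.card P.roots = P.natDegree :=
    splits_iff_card_roots.mp (IsAlgClosed.splits P)
  set s : Multiset k := P.roots with hs
  have hscard : Multiset.card s = m := by rw [hs, hsplit, hPdeg]
  have hPfact : (s.map fun x => X - C x).prod = P := by
    have := C_leadingCoeff_mul_prod_multiset_X_sub_C (p := P) hsplit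
    rwa [hPmonic.leadingCoeff, map_one, one_mul] at this
  -- build the extension
  set l : List k := s.toList with hl
  have hllen : l.length = m := by rw [hl, Multiset.length_toList, hscard]
  set c : Fin m → k := fun i => l.get (Fin.cast hllen.symm i) with hc
  refine ⟨fun i => Fin.append b₀ c (Fin.cast hpe i), ?_, ?_⟩
  · intro j
    exact Fin.append_left b₀ c j
  · intro r hr1 hr2
    set b : Fin p → k := fun i => Fin.append b₀ c (Fin.cast hpe i) with hb
    -- value multiset of b
    have hvals : (Finset.univ.val.map b : Multiset k) = M₀ + s := by
      rw [univ_val_map_eq_ofFn]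
      have h1 : List.ofFn b = List.ofFn (Fin.append b₀ c) :=
        ofFn_cast hpe (Fin.append b₀ c)
      rw [h1, List.ofFn_add]
      simp only [Fin.append_left, Fin.append_right]
      have h2 : (List.ofFn fun i => c i) = l := by
        rw [hc]
        exact (ofFn_cast hllen.symm l.get).trans (List.ofFn_get l)
      rw [h2, ← Multiset.coe_add, ← univ_val_map_eq_ofFn, hl, Multiset.coe_toList]
      rw [hM₀]; congr 1; congr 1; funext i; exact Fin.append_left b₀ c i
    have hrp : r ≤ p := by omega
    have h1 : esym p r b = ((Finset.univ.val.map b : Multiset k)).esymm r := by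
      rw [Finset.esymm_map_val]; rfl
    have hMcard : Multiset.card (M₀ + s) = p := by
      rw [Multiset.card_add, hM₀card, hscard]; omega
    have h2 : (((M₀ + s).map fun x => X - C x).prod).coeff (p - r)
        = (-1) ^ r * (M₀ + s).esymm r := by
      have := Multiset.prod_X_sub_C_coeff (M₀ + s) (k := p - r)
        (by rw [hMcard]; omega)
      rw [hMcard, Nat.sub_sub_self hrp] at this
      exact this
    have h3 : ((M₀ + s).map fun x => X - C x).prod = P₀ * P := by
      rw [Multiset.map_add, Multiset.prod_add, hPfact]
    have h4 : (P₀ * P).coeff (p - r) = (-1) ^ r * a r := by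
      have := hPcoeff r hr1 hr2
      rwa [hP₀deg, show p' + m - r = p - r by omega] at this
    rw [h1, hvals]
    have : (-1 : k) ^ r * (M₀ + s).esymm r = (-1) ^ r * a r := by
      rw [← h2, h3, h4]
    exact mul_left_cancel₀ (pow_ne_zero r (neg_ne_zero.mpr one_ne_zero)) this
end

section
/- Fix a $0^m1^n$-sequence $\Upsilon$ (i.e. a function $|\cdot| : \{1,\ldots,m+n\} \to \{0,1\}$) and integers $0 = p_0 \le p_1 \le \cdots \le p_{m+n}$. Given elements $a_i^{(r)} \in \Bbbk$ for $1 \le i \le m+n$ and $1 \le r \le p_i - p_{i-1}$, there exist elements $b_{i,j} \in \Bbbk$ for $1 \le i \le m+n$, $1 \le j \le p_i$, such that: (1) $b_{i, p_i - p_{i-1} + r} = b_{i-1, r}$ for $1 \le r \le p_{i-1}$; and (2) $e_r((-1)^{|i|} b_{i,1}, \ldots, (-1)^{|i|} b_{i,p_i}) = (-1)^{r|i|} a_i^{(r)}$ for $1 \le r \le p_i - p_{i-1}$. -/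
open Finset

open Polynomial in
/-- There is a monic polynomial `P` of degree `d` prescribing the top `d`
coefficients (below the leading one) of `P * Q`. -/
lemma aux_poly {k : Type*} [Field k] (d : ℕ) (Q : k[X]) (hQ : Q.Monic) (t : ℕ → k) :
    ∃ P : k[X], P.Monic ∧ P.natDegree = d ∧
      ∀ r, 1 ≤ r → r ≤ d → (P * Q).coeff (Q.natDegree + d - r) = t r := by
  induction d with
  | zero => exact ⟨1, monic_one, natDegree_one, fun r h1 h2 => absurd (h1.trans h2) (by omega)⟩
  | succ d ih =>
    obtain ⟨P', hP'm, hP'd, hP'⟩ := ih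
    set q := Q.natDegree with hq
    refine ⟨X * P' + C (t (d + 1) - (X * P' * Q).coeff q), ?_, ?_, ?_⟩
    · have hm : (X * P').Monic := monic_X.mul hP'm
      have hdeg : (C (t (d + 1) - (X * P' * Q).coeff q)).degree < (X * P').degree := by
        apply lt_of_le_of_lt (degree_C_le)
        rw [degree_eq_natDegree hm.ne_zero]
        have : (X * P').natDegree = d + 1 := by
          rw [natDegree_mul X_ne_zero hP'm.ne_zero, natDegree_X, hP'd]; omega
        rw [this]
        exact_mod_cast Nat.cast_pos.mpr (Nat.succ_pos d)
      exact hm.add_of_left hdeg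
    · rw [natDegree_add_C, natDegree_mul X_ne_zero hP'm.ne_zero, natDegree_X, hP'd]
      omega
    · intro r hr1 hr2
      rw [add_mul]
      rcases eq_or_lt_of_le hr2 with h | h
      · rw [h]
        have hs : q + (d + 1) - (d + 1) = q := by omega
        rw [hs, coeff_add, coeff_C_mul, hQ.coeff_natDegree, mul_one]
        ring
      · have hr2' : r ≤ d := by omega
        have h1 : q + (d + 1) - r = (q + d - r) + 1 := by omega
        have h2 : (C (t (d + 1) - (X * P' * Q).coeff q) * Q).coeff (q + (d + 1) - r) = 0 := by
          apply coeff_eq_zero_of_natDegree_lt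
          apply lt_of_le_of_lt (natDegree_mul_le)
          rw [natDegree_C]
          omega
        rw [coeff_add, h2, add_zero, mul_assoc, h1, coeff_X_mul]
        exact hP' r hr1 hr2'

open Polynomial in
/-- Given a multiset `S`, we can add `d` elements prescribing the first `d`
elementary symmetric functions of the union. -/
lemma aux_mset {k : Type*} [Field k] [IsAlgClosed k] (d : ℕ) (S : Multiset k) (t : ℕ → k) :
    ∃ T : Multiset k, Multiset.card T = d ∧
      ∀ r, 1 ≤ r → r ≤ d → (T + S).esymm r = t r := by
  set Q : k[X] := (S.map fun a => X - C a).prod with hQdef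
  have hQm : Q.Monic := monic_multiset_prod_of_monic _ _ fun a _ => monic_X_sub_C a
  have hQdeg : Q.natDegree = Multiset.card S := natDegree_multiset_prod_X_sub_C_eq_card S
  obtain ⟨P, hPm, hPd, hP⟩ := aux_poly d Q hQm (fun r => (-1 : k) ^ r * t r)
  have hPsplits : Splits P := IsAlgClosed.splits P
  have hcard : Multiset.card P.roots = d := by
    rw [← hPd]; exact (splits_iff_card_roots.mp hPsplits)
  refine ⟨P.roots, hcard, fun r hr1 hr2 => ?_⟩
  have hPQm : (P * Q).Monic := hPm.mul hQm
  have hroots : (P * Q).roots = P.roots + S := by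
    rw [roots_mul (hPQm.ne_zero), hQdef, roots_multiset_prod_X_sub_C]
  have hNdeg : (P * Q).natDegree = Q.natDegree + d := by
    rw [natDegree_mul hPm.ne_zero hQm.ne_zero, hPd]; omega
  have hsplits : Splits (P * Q) := IsAlgClosed.splits _
  have hle : Q.natDegree + d - r ≤ (P * Q).natDegree := by omega
  have := Polynomial.coeff_eq_esymm_roots_of_splits hsplits hle
  rw [hPQm.leadingCoeff, one_mul, hNdeg] at this
  have hsub : Q.natDegree + d - (Q.natDegree + d - r) = r := by omega
  rw [hsub, hroots] at this
  have hcoeff := hP r hr1 hr2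
  rw [hcoeff] at this
  have : ((-1 : k) ^ r) * ((-1 : k) ^ r * t r) = ((-1 : k) ^ r) * ((-1) ^ r * (P.roots + S).esymm r) := by
    rw [this]
  rwa [← mul_assoc, ← mul_assoc, ← mul_pow, neg_mul_neg, one_mul, one_pow, one_mul, one_mul,
    eq_comm] at this

/-- One step of the construction. -/
lemma aux_step {k : Type*} [Field k] [IsAlgClosed k] (q d : ℕ) (y t : ℕ → k) :
    ∃ x : ℕ → k,
      (∀ r, 1 ≤ r → r ≤ q → x (d + r) = y r) ∧
      (∀ r, 1 ≤ r → r ≤ d →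
        ((Multiset.range (d + q)).map (fun j => x (j + 1))).esymm r = t r) := by
  obtain ⟨T, hTcard, hT⟩ := aux_mset d ((Multiset.range q).map (fun j => y (j + 1))) t
  set L := T.toList with hL
  have hLlen : L.length = d := by rw [hL, Multiset.length_toList, hTcard]
  refine ⟨fun j => if j ≤ d then L.getD (j - 1) 0 else y (j - d), fun r hr1 hr2 => ?_, ?_⟩
  · have : ¬ (d + r ≤ d) := by omega
    simp only [this, if_false]
    congr 1
    omega
  · intro r hr1 hr2
    have hmset : ((Multiset.range (d + q)).map
        (fun j => (fun j => if j ≤ d then L.getD (j - 1) 0 else y (j - d)) (j + 1)))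
        = T + (Multiset.range q).map (fun j => y (j + 1)) := by
      rw [Multiset.range_add, Multiset.map_add, Multiset.map_map]
      congr 1
      · -- first part equals T
        have h1 : (Multiset.range d).map
            (fun j => (fun j => if j ≤ d then L.getD (j - 1) 0 else y (j - d)) (j + 1))
            = (Multiset.range d).map (fun j => L.getD j 0) := by
          apply Multiset.map_congr rfl
          intro j hj
          rw [Multiset.mem_range] at hj
          have : j + 1 ≤ d := hj
          simp only [this, if_true, Nat.add_sub_cancel]
        rw [h1]
        have : (Multiset.range d).map (fun j => L.getD j 0) = ((List.range d).map (fun j => L.getD j 0) : List k) := by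
          rfl
        rw [this]
        have hlist : (List.range d).map (fun j => L.getD j 0) = L := by
          apply List.ext_getElem
          · simp [hLlen]
          · intro i h1i h2i
            simp only [List.getElem_map, List.getElem_range]
            rw [List.getD_eq_getElem]
        rw [hlist, hL, Multiset.coe_toList]
      · apply Multiset.map_congr rfl
        intro j hj
        rw [Multiset.mem_range] at hj
        simp only [Function.comp]
        have : ¬ (d + j + 1 ≤ d) := by omega
        simp only [this, if_false]
        congr 1
        omega
    rw [hmset]
    exact hT r hr1 hr2

lemma esym_eq_esymm {k : Type*} [CommRing k] (p r : ℕ) (f : ℕ → k) :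
    esym p r (fun j => f (j.1 + 1)) = ((Multiset.range p).map (fun j => f (j + 1))).esymm r := by
  rw [esym]
  rw [← Finset.esymm_map_val (fun j : Fin p => f (j.1 + 1)) Finset.univ r]
  congr 1
  have : (Finset.univ : Finset (Fin p)).val.map (fun j : Fin p => f (j.1 + 1))
      = ((Finset.univ : Finset (Fin p)).map Fin.valEmbedding).val.map (fun j => f (j + 1)) := by
    rw [Finset.map_val, Multiset.map_map]
    rfl
  rw [this, Fin.map_valEmbedding_univ, Nat.Iio_eq_range, Finset.range_val]

lemma esym_smul {k : Type*} [CommRing k] (p r : ℕ) (c : k) (f : Fin p → k) :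
    esym p r (fun j => c * f j) = c ^ r * esym p r f := by
  rw [esym, esym, Finset.mul_sum]
  apply Finset.sum_congr rfl
  intro s hs
  rw [Finset.mem_powersetCard] at hs
  rw [Finset.prod_mul_distrib, Finset.prod_const, hs.2]

/-- Lemma 4.1 of the paper: given a `0^m 1^n`-sequence `par` and integers
`0 = p 0 ≤ p 1 ≤ ⋯ ≤ p (m+n)`, and scalars `a i r` for `1 ≤ i ≤ m+n`,
`1 ≤ r ≤ p i - p (i-1)`, there exist `b i j` (`1 ≤ j ≤ p i`) satisfying the
overlap conditions and prescribing the signed elementary symmetric functions. -/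
theorem stmt4 {k : Type*} [Field k] [IsAlgClosed k] [CharZero k]
    (m n : ℕ) (par : ℕ → ℕ) (hpar : ∀ i, par i ≤ 1)
    (p : ℕ → ℕ) (hp0 : p 0 = 0) (hmono : Monotone p)
    (a : ℕ → ℕ → k) :
    ∃ b : ℕ → ℕ → k,
      (∀ i r, 1 ≤ i → i ≤ m + n → 1 ≤ r → r ≤ p (i - 1) →
        b i (p i - p (i - 1) + r) = b (i - 1) r) ∧
      (∀ i r, 1 ≤ i → i ≤ m + n → 1 ≤ r → r ≤ p i - p (i - 1) →
        esym (p i) r (fun j => ((-1 : k) ^ par i) * b i (j.1 + 1)) =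
          ((-1 : k) ^ (r * par i)) * a i r) := by
  classical
  -- construct `b` by recursion on `i`
  let step : ℕ → (ℕ → k) → (ℕ → k) := fun i prev =>
    (aux_step (p i) (p (i + 1) - p i) prev (a (i + 1))).choose
  let b : ℕ → ℕ → k := fun i => Nat.rec (fun _ => (0 : k)) step i
  have hspec : ∀ i, (∀ r, 1 ≤ r → r ≤ p i → b (i + 1) (p (i + 1) - p i + r) = b i r) ∧
      (∀ r, 1 ≤ r → r ≤ p (i + 1) - p i →
        ((Multiset.range (p (i + 1) - p i + p i)).map (fun j => b (i + 1) (j + 1))).esymm r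
          = a (i + 1) r) := by
    intro i
    exact (aux_step (p i) (p (i + 1) - p i) (b i) (a (i + 1))).choose_spec
  refine ⟨b, ?_, ?_⟩
  · intro i r hi1 _ hr1 hr2
    obtain ⟨i, rfl⟩ : ∃ i', i = i' + 1 := ⟨i - 1, by omega⟩
    simp only [Nat.add_sub_cancel] at hr2 ⊢
    exact (hspec i).1 r hr1 hr2
  · intro i r hi1 _ hr1 hr2
    obtain ⟨i, rfl⟩ : ∃ i', i = i' + 1 := ⟨i - 1, by omega⟩
    simp only [Nat.add_sub_cancel] at hr2 ⊢
    rw [esym_smul, esym_eq_esymm]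
    have hdq : p (i + 1) - p i + p i = p (i + 1) := Nat.sub_add_cancel (hmono (Nat.le_succ i))
    have := (hspec i).2 r hr1 hr2
    rw [hdq] at this
    rw [this, ← pow_mul, mul_comm (par (i + 1)) r]
end

section
/- With $\pi$ and $\widetilde{\rho}$ as in Lemma 2.8, and $\lambda_A = \sum_{i \in I} a_i \varepsilon_i$ for a tableau $A \in \mathrm{Tab}_\Bbbk(\pi)$ with entries $a_i$, the weight $\lambda_A - \widetilde{\rho}$ satisfies the conditions of Lemma 2.7 (constancy on even-parity columns, antisymmetry across parities in a column) if and only if $A$ is column-connected, i.e. whenever box $j$ is directly below box $i$: $a_i = a_j + 1$ if $\bar{p}(i) = \bar{p}(j)$, and $a_i + a_j = -1$ if $\bar{p}(i) \ne \bar{p}(j)$. -/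
open Finset

/-- The `ε_t`-coefficient of the shifted weight `ρ̃` of the paper. -/
def rhoTilde {I : Type*} (par col : I → ℕ) (rk : I → ℤ) (h : ℤ) (ℓ : ℕ) (q : ℕ → ℤ)
    (t : I) : ℤ :=
  (-1) ^ par t * (h - rk t - ∑ c ∈ Finset.Icc (col t) ℓ, q c)

/-- Proposition 2.9 of the paper: for a `π`-tableau `A` (entries `a : I → k`), the
weight `λ_A - ρ̃` satisfies the conditions of Lemma 2.7 (constancy on same-parity
boxes of a column, antisymmetry across parities in a column) if and only if `A`
is column-connected: whenever box `j` is directly below box `i`, `a i = a j + 1`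
if the parities agree and `a i + a j = -1` otherwise. -/
theorem stmt12 {k : Type*} [Field k] [CharZero k] {I : Type*}
    (row col par : I → ℕ) (rk : I → ℤ) (a : I → k) (h : ℤ) (ℓ : ℕ) (q : ℕ → ℤ)
    (hpar : ∀ i, par i ≤ 1)
    -- distinct boxes occupy distinct (row, column) positions
    (hinj : ∀ i j : I, row i = row j → col i = col j → i = j)
    -- columns of the pyramid are convex
    (hconvex : ∀ i j : I, col i = col j → row i < row j →
      ∃ t : I, col t = col i ∧ row t = row i + 1)
    -- behaviour of the super row number down a column (context of Lemma 2.8)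
    (hrk : ∀ i j : I, col j = col i → row j = row i + 1 →
      rk j = rk i + (-1) ^ par j) :
    ((∀ i j : I, col i = col j → par i = par j →
        a i - (rhoTilde par col rk h ℓ q i : k) = a j - (rhoTilde par col rk h ℓ q j : k)) ∧
     (∀ i j : I, col i = col j → par i ≠ par j →
        (a i - (rhoTilde par col rk h ℓ q i : k)) + (a j - (rhoTilde par col rk h ℓ q j : k)) = 0))
    ↔ (∀ i j : I, col j = col i → row j = row i + 1 →
        (par i = par j → a i = a j + 1) ∧ (par i ≠ par j → a i + a j = -1)) := by
  set ρ : I → ℤ := rhoTilde par col rk h ℓ q with hρdef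
  -- key computation of ρ along one step down a column
  have step : ∀ i j : I, col j = col i → row j = row i + 1 →
      (par i = par j → ρ i - ρ j = 1) ∧ (par i ≠ par j → ρ i + ρ j = -1) := by
    intro i j hc hr
    have hrkj := hrk i j hc hr
    have hpi := Nat.le_one_iff_eq_zero_or_eq_one.mp (hpar i)
    have hpj := Nat.le_one_iff_eq_zero_or_eq_one.mp (hpar j)
    have hSij : ∑ c ∈ Finset.Icc (col i) ℓ, q c = ∑ c ∈ Finset.Icc (col j) ℓ, q c := by
      rw [hc]
    constructor
    · intro hp
      simp only [hρdef, rhoTilde, hrkj, ← hSij, ← hp]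
      rcases hpi with h0 | h0 <;> rw [h0] <;> norm_num
    · intro hp
      simp only [hρdef, rhoTilde, hrkj, ← hSij]
      rcases hpi with h0 | h0 <;> rcases hpj with h1 | h1 <;>
        first
        | (exact absurd (h0.trans h1.symm) hp)
        | (rw [h0, h1]; ring)
  constructor
  · rintro ⟨hsame, hdiff⟩ i j hc hr
    have hst := step i j hc hr
    constructor
    · intro hp
      have h1 : ρ i - ρ j = 1 := hst.1 hp
      have h1k : (ρ i : k) - (ρ j : k) = 1 := by exact_mod_cast h1
      have h2 := hsame i j hc.symm hp
      linear_combination h2 + h1k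
    · intro hp
      have h1 : ρ i + ρ j = -1 := hst.2 hp
      have h1k : (ρ i : k) + (ρ j : k) = -1 := by exact_mod_cast h1
      have h2 := hdiff i j hc.symm hp
      linear_combination h2 + h1k
  · intro hcc
    -- general statement by induction on the row difference
    have main : ∀ n : ℕ, ∀ i j : I, col i = col j → row j = row i + n →
        (par i = par j → a i - (ρ i : k) = a j - (ρ j : k)) ∧
        (par i ≠ par j → (a i - (ρ i : k)) + (a j - (ρ j : k)) = 0) := by
      intro n
      induction n with
      | zero =>
        intro i j hc hr
        have : i = j := hinj i j (by omega) hc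
        subst this
        exact ⟨fun _ => rfl, fun hp => absurd rfl hp⟩
      | succ n ih =>
        intro i j hc hr
        obtain ⟨t, hct, hrt⟩ := hconvex i j hc (by omega)
        -- relation between g i and g t
        have hcc' := hcc i t hct hrt
        have hst := step i t hct hrt
        have ihtj := ih t j (hct.trans hc) (by omega)
        have hpi := hpar i; have hpt := hpar t; have hpj := hpar j
        have gstep_eq : par i = par t → a i - (ρ i : k) = a t - (ρ t : k) := by
          intro hp
          have h1 : ρ i - ρ t = 1 := hst.1 hp
          have h1k : (ρ i : k) - (ρ t : k) = 1 := by exact_mod_cast h1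
          have h2 := hcc'.1 hp
          linear_combination h2 - h1k
        have gstep_ne : par i ≠ par t → (a i - (ρ i : k)) + (a t - (ρ t : k)) = 0 := by
          intro hp
          have h1 : ρ i + ρ t = -1 := hst.2 hp
          have h1k : (ρ i : k) + (ρ t : k) = -1 := by exact_mod_cast h1
          have h2 := hcc'.2 hp
          linear_combination h2 - h1k
        by_cases h1 : par i = par t
        · have e1 := gstep_eq h1
          constructor
          · intro hp
            have := ihtj.1 (h1 ▸ hp)
            linear_combination e1 + this
          · intro hp
            have := ihtj.2 (fun he => hp (h1.trans he))
            linear_combination e1 + this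
        · have e1 := gstep_ne h1
          by_cases h2 : par t = par j
          · constructor
            · intro hp; exact absurd (hp.trans h2.symm) h1
            · intro hp
              have := ihtj.1 h2
              linear_combination e1 - this
          · constructor
            · intro hp
              have := ihtj.2 h2
              linear_combination e1 - this
            · intro hp
              exact absurd (by omega) hp
    constructor
    · intro i j hc hp
      rcases le_or_gt (row i) (row j) with hle | hlt
      · exact (main (row j - row i) i j hc (by omega)).1 hp
      · exact ((main (row i - row j) j i hc.symm (by omega)).1 hp.symm).symm
    · intro i j hc hp
      rcases le_or_gt (row i) (row j) with hle | hlt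
      · exact (main (row j - row i) i j hc (by omega)).2 hp
      · have := (main (row i - row j) j i hc.symm (by omega)).2 (Ne.symm hp)
        linear_combination this
end

section
/- Let $R$ be a (super)commutative ring in which all odd elements are zero, i.e. an ordinary commutative ring viewed as a superalgebra concentrated in even degree. Suppose given elements $d_i^{(r)}$ ($1 \le i \le m+n$, $r \ge 0$) and $d_i'^{(r)}$ with $d_i^{(0)} = d_i'^{(0)} = 1$, $\sum_{t=0}^r d_i^{(t)} d_i'^{(r-t)} = \delta_{r,0}$, and $\sum_{t=0}^{r} d_j'^{(r-t)} d_{j+1}^{(t)} = 0$ for all $1 \le j \le m+n-1$ and $r > p_{j+1} - p_j$, together with $d_1^{(r)} = 0$ for $r > p_1$. Then each $d_i^{(r)}$ for $r > p_i - p_{i-1}$ (with $p_0 = 0$) is a polynomial with integer coefficients in the elements $\{d_j^{(s)} : 1 \le j \le i, 1 \le s \le p_j - p_{j-1}\}$. -/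
open Finset

/-- Core computation behind Proposition 3.3 of the paper: in a commutative ring
(the even commutative quotient, all odd elements being zero), given elements
`d i r`, `d' i r` with `d i 0 = d' i 0 = 1`, the convolution relations
`∑_t d i t * d' i (r-t) = δ_{r,0}`, the relations
`∑_t d' j (r-t) * d (j+1) t = 0` for `r > p (j+1) - p j`, and the truncation
`d 1 r = 0` for `r > p 1`, every `d i r` with `r > p i - p (i-1)` lies in the
subring generated by `{d j s : 1 ≤ j ≤ i, 1 ≤ s ≤ p j - p (j-1)}` (i.e. is an
integer polynomial in those elements). -/
theorem stmt16 {R : Type*} [CommRing R] (Nn : ℕ) (p : ℕ → ℕ)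
    (hp0 : p 0 = 0) (hmono : Monotone p) (d d' : ℕ → ℕ → R)
    (hd0 : ∀ i, d i 0 = 1) (hd'0 : ∀ i, d' i 0 = 1)
    (hconv : ∀ i r, ∑ t ∈ Finset.range (r + 1), d i t * d' i (r - t) =
      if r = 0 then 1 else 0)
    (hnext : ∀ j r, 1 ≤ j → j + 1 ≤ Nn → p (j + 1) - p j < r →
      ∑ t ∈ Finset.range (r + 1), d' j (r - t) * d (j + 1) t = 0)
    (htrunc : ∀ r, p 1 < r → d 1 r = 0) :
    ∀ i r, 1 ≤ i → i ≤ Nn → p i - p (i - 1) < r →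
      d i r ∈ Subring.closure
        {x : R | ∃ j s, 1 ≤ j ∧ j ≤ i ∧ 1 ≤ s ∧ s ≤ p j - p (j - 1) ∧ x = d j s} := by
  intro i
  induction i with
  | zero => intro r h1; omega
  | succ k IH =>
    rcases Nat.eq_zero_or_pos k with hk | hk
    · subst hk
      intro r _ _ hr
      have hr' : p 1 < r := by
        have h1 : p 1 - p 0 < r := hr
        omega
      rw [htrunc r hr']
      exact zero_mem _
    · intro r h1 hNn
      have hkN : k ≤ Nn := by omega
      have hmonoS :
          Subring.closure
            {x : R | ∃ j s, 1 ≤ j ∧ j ≤ k ∧ 1 ≤ s ∧ s ≤ p j - p (j - 1) ∧ x = d j s} ≤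
          Subring.closure
            {x : R | ∃ j s, 1 ≤ j ∧ j ≤ k + 1 ∧ 1 ≤ s ∧ s ≤ p j - p (j - 1) ∧ x = d j s} :=
        Subring.closure_mono (fun x ⟨j, s, a1, a2, a3, a4, a5⟩ =>
          ⟨j, s, a1, by omega, a3, a4, a5⟩)
      have Hd : ∀ t, 1 ≤ t → d k t ∈ Subring.closure
          {x : R | ∃ j s, 1 ≤ j ∧ j ≤ k ∧ 1 ≤ s ∧ s ≤ p j - p (j - 1) ∧ x = d j s} := by
        intro t ht
        by_cases h : t ≤ p k - p (k - 1)
        · exact Subring.subset_closure ⟨k, t, hk, le_refl k, ht, h, rfl⟩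
        · exact IH t hk hkN (by omega)
      have Hd' : ∀ s, d' k s ∈ Subring.closure
          {x : R | ∃ j s, 1 ≤ j ∧ j ≤ k ∧ 1 ≤ s ∧ s ≤ p j - p (j - 1) ∧ x = d j s} := by
        intro s
        induction s using Nat.strong_induction_on with
        | _ s ihs =>
          rcases Nat.eq_zero_or_pos s with h0 | h0
          · subst h0; rw [hd'0]; exact one_mem _
          · have hc := hconv k s
            rw [Finset.sum_range_succ', if_neg (by omega : s ≠ 0)] at hc
            rw [hd0, one_mul, Nat.sub_zero] at hc
            have heq : d' k s = -∑ t ∈ Finset.range s, d k (t + 1) * d' k (s - (t + 1)) := by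
              linear_combination hc
            rw [heq]
            exact neg_mem (Subring.sum_mem _ fun t _ =>
              mul_mem (Hd (t + 1) (by omega)) (ihs (s - (t + 1)) (by omega)))
      clear h1
      induction r using Nat.strong_induction_on with
      | _ r ihr =>
        intro hr
        have hr' : p (k + 1) - p k < r := by
          have h2 := hr; simp only [Nat.add_sub_cancel] at h2; exact h2
        have hn := hnext k r hk hNn hr'
        rw [Finset.sum_range_succ, Nat.sub_self, hd'0, one_mul] at hn
        have heq : d (k + 1) r = -∑ t ∈ Finset.range r, d' k (r - t) * d (k + 1) t := by
          linear_combination hn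
        rw [heq]
        refine neg_mem (Subring.sum_mem _ fun t htm => mul_mem (hmonoS (Hd' (r - t))) ?_)
        rcases Nat.eq_zero_or_pos t with h0 | h0
        · subst h0; rw [hd0]; exact one_mem _
        by_cases hle : t ≤ p (k + 1) - p k
        · exact Subring.subset_closure
            ⟨k + 1, t, by omega, le_refl _, h0, by simpa using hle, rfl⟩
        · exact ihr t (Finset.mem_range.mp htm) (by simp only [Nat.add_sub_cancel]; omega)
end

section
/- Let $A \in \mathrm{Tab}_\Bbbk(\pi)$ be column-connected with entries $a_{i,1}, \ldots, a_{i,p_i}$ in the $i$-th row. Define the action of $D_i^{(r)}$ on the one-dimensional module $\widetilde{\Bbbk}_A$ by the scalar $(-1)^{r|i|} e_r\big(a_{i,1} + (-1)^{|i|}\hat{\mathrm{row}}(i), \ldots, a_{i,p_i} + (-1)^{|i|}\hat{\mathrm{row}}(i)\big)$. Then given arbitrary scalars $a_i^{(r)} \in \Bbbk$ for $1 \le i \le m+n$, $1 \le r \le p_i - p_{i-1}$, there exists a column-connected tableau $A$ such that $D_i^{(r)}$ acts by $a_i^{(r)}$ for all such $i, r$. -/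
open Finset

section Aux
open Polynomial

lemma key {k : Type*} [Field k] [IsAlgClosed k] (F : Multiset k) (q : ℕ) (c : ℕ → k) :
    ∃ g : List k, g.length = q ∧ ∀ r, 1 ≤ r → r ≤ q → (F + ↑g).esymm r = c r := by
  classical
  set n := Multiset.card F + q with hn
  set PF : k[X] := (F.map fun t => X - C t).prod with hPF
  have hPFm : PF.Monic :=
    monic_multiset_prod_of_monic _ _ fun t _ => monic_X_sub_C t
  have hPFdeg : PF.natDegree = Multiset.card F := natDegree_multiset_prod_X_sub_C_eq_card F
  set S : k[X] := ∑ r ∈ Finset.Icc 1 q, C ((-1) ^ r * c r) * X ^ (n - r) with hS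
  have hSdeg : S.degree < (n : WithBot ℕ) := by
    apply lt_of_le_of_lt (degree_sum_le _ _)
    rw [Finset.sup_lt_iff (by exact Batteries.compareOfLessAndEq_eq_lt.mp rfl)]
    intro r hr
    rw [Finset.mem_Icc] at hr
    calc (C ((-1) ^ r * c r) * X ^ (n - r)).degree
        ≤ ((n - r : ℕ) : WithBot ℕ) := degree_C_mul_X_pow_le _ _
      _ < (n : WithBot ℕ) := by exact_mod_cast (by omega : n - r < n)
  set T : k[X] := X ^ n + S with hT
  have hTm : T.Monic := monic_X_pow_add hSdeg
  have hTdegree : T.degree = n := by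
    rw [hT, add_comm, degree_add_eq_right_of_degree_lt (by simpa using hSdeg), degree_X_pow]
  have hTdeg : T.natDegree = n := natDegree_eq_of_degree_eq_some hTdegree
  -- coefficients of T
  have hTcoeff : ∀ r, 1 ≤ r → r ≤ q → T.coeff (n - r) = (-1) ^ r * c r := by
    intro r h1 h2
    rw [hT, coeff_add, coeff_X_pow, if_neg (by omega), zero_add, hS, finset_sum_coeff]
    rw [Finset.sum_eq_single r]
    · rw [coeff_C_mul, coeff_X_pow, if_pos rfl, mul_one]
    · intro b hb hbr
      rw [Finset.mem_Icc] at hb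
      rw [coeff_C_mul, coeff_X_pow, if_neg (by omega), mul_zero]
    · intro h; exact absurd (Finset.mem_Icc.mpr ⟨h1, h2⟩) h
  set Q := T /ₘ PF with hQ
  have hTQ : PF * Q = T - T %ₘ PF := by
    have := modByMonic_add_div T PF
    linear_combination this
  have hQnd : Q.natDegree = q := by
    rw [hQ, natDegree_divByMonic T hPFm, hTdeg, hPFdeg]; omega
  have hRdeg : (T %ₘ PF).degree < PF.degree := degree_modByMonic_lt T hPFm
  have hPFdegree : PF.degree = (Multiset.card F : WithBot ℕ) := by
    rw [degree_eq_natDegree hPFm.ne_zero, hPFdeg]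
  have hRn : ∀ j, Multiset.card F ≤ j → (T %ₘ PF).coeff j = 0 := fun j hj =>
    coeff_eq_zero_of_degree_lt (lt_of_lt_of_le hRdeg
      (by rw [hPFdegree]; exact_mod_cast hj))
  have hdeg : (PF * Q).degree = T.degree := by
    rw [hTQ]
    exact degree_sub_eq_left_of_degree_lt (lt_of_lt_of_le hRdeg
      (by rw [hPFdegree, hTdegree]; exact_mod_cast Nat.le_add_right _ _))
  have hnd : (PF * Q).natDegree = n := natDegree_eq_of_degree_eq_some (hdeg.trans hTdegree)
  have hPQm : (PF * Q).Monic := by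
    have : (PF * Q).leadingCoeff = 1 := by
      rw [leadingCoeff, hnd, hTQ, coeff_sub, hRn n (Nat.le_add_right _ _), sub_zero, ← hTdeg]
      exact hTm.coeff_natDegree
    exact this
  have hQm : Q.Monic := by
    have := hPQm
    unfold Monic at this ⊢
    rwa [leadingCoeff_mul, hPFm.leadingCoeff, one_mul] at this
  have hsplit : Q.Splits := IsAlgClosed.splits Q
  have hQprod : Q = (Q.roots.map fun t => X - C t).prod :=
    hsplit.eq_prod_roots_of_monic hQm
  have hQcard : Multiset.card Q.roots = q := by
    rw [(splits_iff_card_roots).mp hsplit, hQnd]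
  refine ⟨Q.roots.toList, by simp [hQcard], ?_⟩
  intro r h1 h2
  have hM : ((F + Q.roots).map fun t => X - C t).prod = PF * Q := by
    rw [Multiset.map_add, Multiset.prod_add, ← hQprod]
  have hcard : Multiset.card (F + Q.roots) = n := by
    rw [Multiset.card_add, hQcard]
  have hv := Multiset.prod_X_sub_C_coeff (F + Q.roots) (k := n - r)
    (by rw [hcard]; omega)
  rw [hM, hcard] at hv
  have hnr : n - (n - r) = r := by omega
  rw [hnr] at hv
  have hco : (PF * Q).coeff (n - r) = (-1) ^ r * c r := by
    rw [hTQ, coeff_sub, hTcoeff r h1 h2, hRn (n - r) (by omega), sub_zero]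
  have := hv.symm.trans hco
  have hne : ((-1 : k) ^ r) ≠ 0 := by simp
  rw [Multiset.coe_toList]
  exact mul_left_cancel₀ hne this

lemma esym_mul {k : Type*} [CommRing k] (P r : ℕ) (a : k) (b : Fin P → k) :
    esym P r (fun j => a * b j) = a ^ r * esym P r b := by
  unfold esym
  rw [Finset.mul_sum]
  refine Finset.sum_congr rfl fun t ht => ?_
  rw [Finset.prod_mul_distrib, Finset.prod_const, (Finset.mem_powersetCard_univ.mp ht)]

lemma esym_list {k : Type*} [CommRing k] (l : List k) (P r : ℕ) (h : l.length = P) :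
    esym P r (fun j => l.getD j 0) = (↑l : Multiset k).esymm r := by
  subst h
  rw [esym, ← Finset.esymm_map_val, Fin.univ_val_map]
  congr 1
  show ((List.ofFn fun j : Fin l.length => l.getD j 0 : List k) : Multiset k) = (l : Multiset k)
  congr 1
  calc (List.ofFn fun j : Fin l.length => l.getD j 0)
      = List.ofFn (fun j : Fin l.length => l[(j : ℕ)]) := by
        apply congrArg; funext j; exact List.getD_eq_getElem l 0 j.2
    _ = l := List.ofFn_getElem


end Aux

/-- Step (2) of the proof of Theorem 4.3 of the paper: given arbitrary target
scalars `aT i r` (`1 ≤ i ≤ m+n`, `1 ≤ r ≤ p i - p (i-1)`), there exists a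
column-connected tableau `A` — column-connectedness being expressed (via
Lemma 4.2) by the overlap conditions `b_{i, s_{i,i-1}+r} = b_{i-1,r}` for
`b_{i,j} = (-1)^{|i|} a_{i,j} + roŵ(i)` — such that each generator `D_i^{(r)}`
acts on `𝕜̃_A` by the scalar
`(-1)^{r|i|} e_r(a_{i,1} + (-1)^{|i|} roŵ(i), …, a_{i,p_i} + (-1)^{|i|} roŵ(i)) = aT i r`. -/
theorem stmt17 {k : Type*} [Field k] [IsAlgClosed k] [CharZero k]
    (m n : ℕ) (p : ℕ → ℕ) (hp0 : p 0 = 0) (hmono : Monotone p)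
    (par : ℕ → ℕ) (hpar : ∀ i, par i ≤ 1)
    (rowhat : ℕ → ℤ) (s : ℕ → ℕ → ℕ)
    (hs : ∀ i, 1 ≤ i → s i (i - 1) + p (i - 1) ≤ p i)
    (aT : ℕ → ℕ → k) :
    ∃ A : ℕ → ℕ → k,
      -- `A` is (row-equivalent to) a column-connected tableau: overlap conditions
      (∀ i r, 2 ≤ i → i ≤ m + n → 1 ≤ r → r ≤ p (i - 1) →
        ((-1 : k) ^ par i) * A i (s i (i - 1) + r) + (rowhat i : k) =
          ((-1 : k) ^ par (i - 1)) * A (i - 1) r + (rowhat (i - 1) : k)) ∧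
      -- each `D_i^{(r)}` acts by the prescribed scalar `aT i r`
      (∀ i r, 1 ≤ i → i ≤ m + n → 1 ≤ r → r ≤ p i - p (i - 1) →
        ((-1 : k) ^ (r * par i)) *
            esym (p i) r (fun j => A i (j.1 + 1) + ((-1 : k) ^ par i) * (rowhat i : k)) =
          aT i r) := by
  classical
  choose G hGlen hGesymm using fun (F : Multiset k) (q : ℕ) (c : ℕ → k) => key F q c
  -- the free entries for row i+1, given row i's list
  set gf : ℕ → List k → List k := fun i prev => G ↑prev (p (i + 1) - p i) (aT (i + 1)) with hgf
  -- the rows, built recursively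
  set L : ℕ → List k := fun i => Nat.rec []
    (fun i' prev => (gf i' prev).take (s (i' + 1) i') ++ prev ++ (gf i' prev).drop (s (i' + 1) i')) i
    with hLdef
  have hLs : ∀ i', L (i' + 1) =
      (gf i' (L i')).take (s (i' + 1) i') ++ L i' ++ (gf i' (L i')).drop (s (i' + 1) i') := by
    intro i'; rfl
  have hsq : ∀ i', s (i' + 1) i' ≤ p (i' + 1) - p i' := by
    intro i'
    have := hs (i' + 1) (Nat.le_add_left _ _)
    simp only [Nat.add_sub_cancel] at this
    omega
  have hglen : ∀ i', (gf i' (L i')).length = p (i' + 1) - p i' := fun i' => hGlen _ _ _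
  have hlen : ∀ i, (L i).length = p i := by
    intro i
    induction i with
    | zero => simp [hLdef, hp0]
    | succ i' ih =>
      rw [hLs i']
      have h1 := hglen i'
      have h2 := hsq i'
      have h3 := hmono (Nat.le_add_right i' 1)
      simp only [List.length_append, List.length_take, List.length_drop, ih, h1,
        Nat.succ_eq_add_one]
      omega
  -- the tableau
  refine ⟨fun i j => ((-1 : k) ^ par i) * ((L i).getD (j - 1) 0 - (rowhat i : k)), ?_, ?_⟩
  · -- overlap conditions
    intro i r h2i him h1r hrp
    obtain ⟨i', rfl⟩ : ∃ i', i = i' + 1 := ⟨i - 1, by omega⟩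
    have hsq2 : ((-1 : k) ^ par (i' + 1)) * ((-1 : k) ^ par (i' + 1)) = 1 := by
      rw [← pow_add]; exact Even.neg_one_pow ⟨par (i' + 1), by ring⟩
    have hsq2' : ((-1 : k) ^ par i') * ((-1 : k) ^ par i') = 1 := by
      rw [← pow_add]; exact Even.neg_one_pow ⟨par i', by ring⟩
    simp only [Nat.add_sub_cancel] at hrp ⊢
    have key2 : (L (i' + 1)).getD (s (i' + 1) i' + r - 1) 0 = (L i').getD (r - 1) 0 := by
      rw [hLs i']
      set t := (gf i' (L i')).take (s (i' + 1) i') with ht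
      have htl : t.length = s (i' + 1) i' := by
        rw [ht, List.length_take, hglen i']
        exact min_eq_left (hsq i')
      have hidx : s (i' + 1) i' + r - 1 < (t ++ L i').length := by
        rw [List.length_append, htl, hlen i']; omega
      rw [List.getD_append _ _ _ _ hidx]
      rw [List.getD_append_right _ _ _ _ (by rw [htl]; omega)]
      congr 1
      rw [htl]; omega
    calc ((-1 : k) ^ par (i' + 1)) * (((-1 : k) ^ par (i' + 1)) *
          ((L (i' + 1)).getD (s (i' + 1) i' + r - 1) 0 - (rowhat (i' + 1) : k))) + (rowhat (i' + 1) : k)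
        = (((-1 : k) ^ par (i' + 1)) * ((-1 : k) ^ par (i' + 1))) *
          ((L (i' + 1)).getD (s (i' + 1) i' + r - 1) 0 - (rowhat (i' + 1) : k)) + (rowhat (i' + 1) : k) := by ring
      _ = (L (i' + 1)).getD (s (i' + 1) i' + r - 1) 0 := by rw [hsq2]; ring
      _ = (L i').getD (r - 1) 0 := key2
      _ = (((-1 : k) ^ par i') * ((-1 : k) ^ par i')) *
          ((L i').getD (r - 1) 0 - (rowhat i' : k)) + (rowhat i' : k) := by rw [hsq2']; ring
      _ = ((-1 : k) ^ par i') * (((-1 : k) ^ par i') *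
          ((L i').getD (r - 1) 0 - (rowhat i' : k))) + (rowhat i' : k) := by ring
  · -- esym conditions
    intro i r h1i him h1r hrq
    obtain ⟨i', rfl⟩ : ∃ i', i = i' + 1 := ⟨i - 1, by omega⟩
    simp only [Nat.add_sub_cancel] at hrq
    have hfun : (fun j : Fin (p (i' + 1)) =>
        ((-1 : k) ^ par (i' + 1)) * ((L (i' + 1)).getD (j.1 + 1 - 1) 0 - (rowhat (i' + 1) : k)) +
          ((-1 : k) ^ par (i' + 1)) * (rowhat (i' + 1) : k)) =
        fun j : Fin (p (i' + 1)) => ((-1 : k) ^ par (i' + 1)) * (L (i' + 1)).getD j.1 0 := by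
      funext j
      simp only [Nat.add_sub_cancel]
      ring
    rw [hfun, esym_mul, esym_list _ _ _ (hlen (i' + 1))]
    have hpow : ((-1 : k) ^ (r * par (i' + 1))) * (((-1 : k) ^ par (i' + 1)) ^ r) = 1 := by
      rw [← pow_mul, ← pow_add]
      exact Even.neg_one_pow ⟨r * par (i' + 1), by ring⟩
    have hca : ∀ (a b : List k), ((a ++ b : List k) : Multiset k) = ↑a + ↑b := fun a b =>
      (Multiset.coe_add a b).symm
    have hmul : (↑(L (i' + 1)) : Multiset k) = ↑(L i') + ↑(gf i' (L i')) := by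
      rw [hLs i', hca, hca]
      conv_rhs => rw [← List.take_append_drop (s (i' + 1) i') (gf i' (L i')), hca]
      abel
    rw [← mul_assoc, hpow, one_mul, hmul]
    exact hGesymm (↑(L i')) (p (i' + 1) - p i') (aT (i' + 1)) r h1r hrq
end
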